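/- Let (u_t)_{t∈ℤ} be a sequence of nonnegative reals, C ≥ 0, p ≥ 1 an integer, (a_i)_{i≥1} nonnegative with a := ∑_{i≥1} a_i < 1, and (S_k) defined by S_k = ∑_{j≥k} a_j. Suppose u_t = 0 for t ≤ -N' for some N' > N ≥ 1, u_t ≤ C for -N' < t ≤ -N, and u_t ≤ ∑_{i=1}^p a_i u_{t-i} + C·S_{p+1} for t > -N. Then for all t, u_t ≤ C·( a^{max(0, t+N)/p} + S_{p+1}/(1-a) ). -/

import Mathlib

/-- The Cauchy estimate (bound (5.2)) in the proof of Theorem 5.1: under the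
recursion `u_t ≤ ∑_{i=1}^p a_i u_{t-i} + C S_{p+1}` for `t > -N`, with `u_t = 0`
for `t ≤ -N'` and `u_t ≤ C` for `-N' < t ≤ -N`, one has
`u_t ≤ C (a^{max(0,t+N)/p} + S_{p+1}/(1-a))` for all `t`. -/
theorem stmt8 (u : ℤ → ℝ) (C : ℝ) (p : ℕ) (a : ℕ → ℝ) (N N' : ℕ)
    (hC : 0 ≤ C) (hp : 1 ≤ p) (ha : ∀ i, 0 ≤ a i)
    (hsum : Summable fun i : ℕ => a (i + 1))
    (hA : (∑' i : ℕ, a (i + 1)) < 1)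
    (hN : 1 ≤ N) (hNN' : N < N')
    (h1 : ∀ t : ℤ, t ≤ -(N' : ℤ) → u t = 0)
    (h2 : ∀ t : ℤ, -(N' : ℤ) < t → t ≤ -(N : ℤ) → u t ≤ C)
    (hrec : ∀ t : ℤ, -(N : ℤ) < t →
      u t ≤ (∑ i ∈ Finset.Icc 1 p, a i * u (t - (i : ℤ))) +
        C * ∑' j : ℕ, a (p + 1 + j)) :
    ∀ t : ℤ, u t ≤ C * ((∑' i : ℕ, a (i + 1)) ^ ((((t + N) ⊔ 0).toNat : ℝ) / p) +
      (∑' j : ℕ, a (p + 1 + j)) / (1 - ∑' i : ℕ, a (i + 1))) := by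
  set A := ∑' i : ℕ, a (i + 1) with hAdef
  set S := ∑' j : ℕ, a (p + 1 + j) with hSdef
  have hA0 : 0 ≤ A := tsum_nonneg fun i => ha _
  have hS0 : 0 ≤ S := tsum_nonneg fun j => ha _
  have h1A : 0 < 1 - A := by linarith
  have hp0 : (0 : ℝ) < p := by exact_mod_cast hp
  have hIccA : ∑ i ∈ Finset.Icc 1 p, a i ≤ A := by
    have h1 : ∑ i ∈ Finset.Icc 1 p, a i = ∑ i ∈ Finset.range p, a (i + 1) := by
      rw [← Finset.Ico_add_one_right_eq_Icc, Finset.sum_Ico_eq_sum_range]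
      simp [Nat.add_comm]
    rw [h1]
    exact Summable.sum_le_tsum _ (fun i _ => ha _) hsum
  have key : ∀ n : ℕ, ∀ t : ℤ, t ≤ -(N' : ℤ) + n →
      u t ≤ C * (A ^ ((((t + N) ⊔ 0).toNat : ℝ) / p) + S / (1 - A)) := by
    intro n
    induction n with
    | zero =>
      intro t ht
      rw [h1 t (by exact_mod_cast (by simpa using ht))]
      exact mul_nonneg hC (add_nonneg (Real.rpow_nonneg hA0 _) (div_nonneg hS0 h1A.le))
    | succ n ih =>
      intro t ht
      rcases le_or_gt t (-(N' : ℤ) + n) with hle | hgt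
      · exact ih t hle
      rcases le_or_gt t (-(N : ℤ)) with hle2 | hgt2
      · -- boundary region: u t ≤ C and exponent is 0
        have hm : (((t + N) ⊔ 0).toNat : ℝ) = 0 := by
          norm_num; omega
        have huC : u t ≤ C := by
          rcases le_or_gt t (-(N' : ℤ)) with hle3 | hgt3
          · rw [h1 t hle3]; exact hC
          · exact h2 t hgt3 hle2
        rw [hm]
        have : A ^ ((0 : ℝ) / p) = 1 := by rw [zero_div, Real.rpow_zero]
        rw [this]
        have hx : 0 ≤ S / (1 - A) := div_nonneg hS0 h1A.le
        nlinarith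
      · -- recursion region
        have hrt := hrec t hgt2
        rcases eq_or_lt_of_le hA0 with hA0' | hApos
        · -- A = 0 : all a (i+1) = 0, S = 0
          have hai : ∀ i : ℕ, a (i + 1) = 0 := by
            intro i
            have h1 := Summable.le_tsum hsum i (fun j _ => ha _)
            have h2 := ha (i + 1)
            rw [← hAdef, ← hA0'] at h1
            linarith
          have hS : S = 0 := by
            rw [hSdef]
            have : ∀ j : ℕ, a (p + 1 + j) = 0 := by
              intro j
              have := hai (p + j)
              convert this using 2
              omega
            simp [this]
          have hsum0 : (∑ i ∈ Finset.Icc 1 p, a i * u (t - (i : ℤ))) = 0 := by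
            apply Finset.sum_eq_zero
            intro i hi
            have hi1 : 1 ≤ i := (Finset.mem_Icc.mp hi).1
            have : a i = 0 := by
              have := hai (i - 1)
              rwa [Nat.sub_add_cancel hi1] at this
            simp [this]
          rw [hsum0, hS] at hrt
          have hmt : (0 : ℝ) < (((t + N) ⊔ 0).toNat : ℝ) / p := by
            apply div_pos _ hp0
            have : 0 < ((t + N) ⊔ 0).toNat := by omega
            exact_mod_cast this
          rw [← hA0', hS, Real.zero_rpow (ne_of_gt hmt)]
          simpa using hrt
        · -- A > 0
          set mt : ℕ := ((t + N) ⊔ 0).toNat with hmtdef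
          set D : ℝ := C * (A ^ ((mt : ℝ) / p) / A + S / (1 - A)) with hDdef
          have hrpow0 : (0 : ℝ) ≤ A ^ ((mt : ℝ) / p) := Real.rpow_nonneg hA0 _
          have hD0 : 0 ≤ D :=
            mul_nonneg hC (add_nonneg (div_nonneg hrpow0 hA0) (div_nonneg hS0 h1A.le))
          have hterm : ∀ i ∈ Finset.Icc 1 p, a i * u (t - (i : ℤ)) ≤ a i * D := by
            intro i hi
            obtain ⟨hi1, hip⟩ := Finset.mem_Icc.mp hi
            apply mul_le_mul_of_nonneg_left _ (ha i)
            have hih := ih (t - (i : ℤ)) (by omega)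
            refine hih.trans ?_
            rw [hDdef]
            apply mul_le_mul_of_nonneg_left _ hC
            apply add_le_add_left
            -- A ^ (m(t-i)/p) ≤ A ^ (mt/p) / A
            have hmle : (mt : ℝ) / p - 1 ≤ (((t - (i : ℤ) + N) ⊔ 0).toNat : ℝ) / p := by
              rw [sub_le_iff_le_add, div_add' _ _ _ (ne_of_gt hp0), div_le_div_iff₀ hp0 hp0]
              have hnat : mt ≤ ((t - (i : ℤ) + N) ⊔ 0).toNat + p := by omega
              have : (mt : ℝ) ≤ (((t - (i : ℤ) + N) ⊔ 0).toNat : ℝ) + p := by exact_mod_cast hnat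
              nlinarith
            calc A ^ ((((t - (i : ℤ) + N) ⊔ 0).toNat : ℝ) / p)
                ≤ A ^ ((mt : ℝ) / p - 1) :=
                  Real.rpow_le_rpow_of_exponent_ge hApos hA.le hmle
              _ = A ^ ((mt : ℝ) / p) / A := by
                  rw [Real.rpow_sub hApos, Real.rpow_one]
          have hsum_le : (∑ i ∈ Finset.Icc 1 p, a i * u (t - (i : ℤ))) ≤ A * D := by
            calc (∑ i ∈ Finset.Icc 1 p, a i * u (t - (i : ℤ)))
                ≤ ∑ i ∈ Finset.Icc 1 p, a i * D := Finset.sum_le_sum hterm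
              _ = (∑ i ∈ Finset.Icc 1 p, a i) * D := by rw [← Finset.sum_mul]
              _ ≤ A * D := mul_le_mul_of_nonneg_right hIccA hD0
          have hut : u t ≤ A * D + C * S := hrt.trans (by linarith)
          have hAD : A * D = C * A ^ ((mt : ℝ) / p) + A * (C * S / (1 - A)) := by
            rw [hDdef]; field_simp
          have hfin : A * (C * S / (1 - A)) + C * S = C * S / (1 - A) := by
            field_simp; ring
          have : u t ≤ C * A ^ ((mt : ℝ) / p) + C * S / (1 - A) := by
            rw [hAD] at hut; linarith
          calc u t ≤ C * A ^ ((mt : ℝ) / p) + C * S / (1 - A) := this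
            _ = C * (A ^ ((mt : ℝ) / p) + S / (1 - A)) := by ring
  intro t
  exact key (t + N').toNat t (by omega)
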